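/- arXiv:2208.13756 — 5 statements merged into one kernel-verified Lean document; each statement's English description precedes it below -/
import Mathlib

section
/- Let H be a real Hilbert space and T a strongly continuous one-parameter operator semigroup on H with ‖T(t)‖ ≤ M e^{a t} for all t ≥ 0 (M ≥ 1, a ∈ ℝ). Let ρ > 0, β > 0, and let φ : [0,∞) → ℝ be continuous with φ(0) = 1 and 0 < φ(t) ≤ e^{−ρt} for all t ≥ 0. Let n ∈ ℕ, k, i ∈ {2,3}, and let t_j be a real number with (n+1)β ≤ t_j < (n+2)β. Then for all h, g ∈ H, |(1/β)∫₀^β e^{kρβ} φ((n+i)β + s − t_j) ⟨T(β−s)h, g⟩ ds − ⟨h, g⟩| ≤ ‖g‖ ( ‖h‖ M max_{s∈[(i−2)β, iβ]} |e^{kρβ}φ(s) − 1| · 𝐞(aβ) + sup_{s∈[0,β]} ‖T(s)h − h‖ ). -/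
open scoped Classical RealInnerProductSpace
open Real MeasureTheory

noncomputable def ee (t : ℝ) : ℝ := if t = 0 then 1 else (Real.exp t - 1) / t

theorem statement2
    {H : Type*} [NormedAddCommGroup H] [InnerProductSpace ℝ H] [CompleteSpace H]
    (T : ℝ → H →L[ℝ] H)
    (hT0 : T 0 = ContinuousLinearMap.id ℝ H)
    (hTadd : ∀ t s : ℝ, 0 ≤ t → 0 ≤ s → T (t + s) = (T t).comp (T s))
    (hTcont : ∀ v : H, ContinuousOn (fun t => T t v) (Set.Ici 0))
    (M a : ℝ) (hM : 1 ≤ M)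
    (hTbound : ∀ t : ℝ, 0 ≤ t → ‖T t‖ ≤ M * Real.exp (a * t))
    (ρ β : ℝ) (hρ : 0 < ρ) (hβ : 0 < β)
    (φ : ℝ → ℝ) (hφcont : ContinuousOn φ (Set.Ici 0)) (hφ0 : φ 0 = 1)
    (hφpos : ∀ t : ℝ, 0 ≤ t → 0 < φ t)
    (hφdec : ∀ t : ℝ, 0 ≤ t → φ t ≤ Real.exp (-ρ * t))
    (n k i : ℕ) (hk : k = 2 ∨ k = 3) (hi : i = 2 ∨ i = 3)
    (tj : ℝ) (htj1 : ((n:ℝ) + 1) * β ≤ tj) (htj2 : tj < ((n:ℝ) + 2) * β)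
    (h g : H) :
    |(1 / β) * (∫ s in (0:ℝ)..β,
        Real.exp ((k:ℝ) * ρ * β) * φ (((n:ℝ) + (i:ℝ)) * β + s - tj)
          * ⟪T (β - s) h, g⟫)
      - ⟪h, g⟫|
    ≤ ‖g‖ * (‖h‖ * M
        * (⨆ s : Set.Icc (((i:ℝ) - 2) * β) ((i:ℝ) * β),
            |Real.exp ((k:ℝ) * ρ * β) * φ (s:ℝ) - 1|)
        * ee (a * β)
        + ⨆ s : Set.Icc (0:ℝ) β, ‖T (s:ℝ) h - h‖) := by
  have hi2 : (2:ℝ) ≤ (i:ℝ) := by rcases hi with h'|h' <;> subst h' <;> norm_num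
  set A := Real.exp ((k:ℝ) * ρ * β) with hAdef
  -- the supremum C
  have hsubC : Set.Icc (((i:ℝ) - 2) * β) ((i:ℝ) * β) ⊆ Set.Ici (0:ℝ) := by
    intro x hx
    have h1 := hx.1
    have : (0:ℝ) ≤ ((i:ℝ) - 2) * β := by nlinarith
    simp only [Set.mem_Ici]; linarith
  have hcontC : ContinuousOn (fun s => |A * φ s - 1|)
      (Set.Icc (((i:ℝ) - 2) * β) ((i:ℝ) * β)) :=
    ((continuousOn_const.mul (hφcont.mono hsubC)).sub continuousOn_const).abs
  have hIccle : ((i:ℝ) - 2) * β ≤ (i:ℝ) * β := by nlinarith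
  have hBddC : BddAbove (Set.range fun s : Set.Icc (((i:ℝ) - 2) * β) ((i:ℝ) * β) =>
      |A * φ (s:ℝ) - 1|) := by
    obtain ⟨m, hmem, hm⟩ := isCompact_Icc.exists_isMaxOn
      (Set.nonempty_Icc.mpr hIccle) hcontC
    exact ⟨|A * φ m - 1|, by rintro x ⟨s, rfl⟩; exact hm s.2⟩
  set C := ⨆ s : Set.Icc (((i:ℝ) - 2) * β) ((i:ℝ) * β), |A * φ (s:ℝ) - 1| with hCdef
  have hC : ∀ s ∈ Set.Icc (((i:ℝ) - 2) * β) ((i:ℝ) * β), |A * φ s - 1| ≤ C := by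
    intro s hs
    exact le_ciSup hBddC (⟨s, hs⟩ : Set.Icc (((i:ℝ) - 2) * β) ((i:ℝ) * β))
  have hC0 : 0 ≤ C := by
    exact le_trans (abs_nonneg _) (hC _ ⟨le_refl _, hIccle⟩)
  -- the supremum D
  have hcontD : ContinuousOn (fun s => ‖T s h - h‖) (Set.Icc (0:ℝ) β) :=
    (((hTcont h).mono (Set.Icc_subset_Ici_self)).sub continuousOn_const).norm
  have hBddD : BddAbove (Set.range fun s : Set.Icc (0:ℝ) β => ‖T (s:ℝ) h - h‖) := by
    obtain ⟨m, hmem, hm⟩ := isCompact_Icc.exists_isMaxOn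
      (Set.nonempty_Icc.mpr hβ.le) hcontD
    exact ⟨‖T m h - h‖, by rintro x ⟨s, rfl⟩; exact hm s.2⟩
  set D := ⨆ s : Set.Icc (0:ℝ) β, ‖T (s:ℝ) h - h‖ with hDdef
  have hD : ∀ s ∈ Set.Icc (0:ℝ) β, ‖T s h - h‖ ≤ D := by
    intro s hs
    exact le_ciSup hBddD (⟨s, hs⟩ : Set.Icc (0:ℝ) β)
  have hD0 : 0 ≤ D :=
    le_trans (norm_nonneg _) (hD 0 ⟨le_refl _, hβ.le⟩)
  -- abbreviations
  set c : ℝ := ⟪h, g⟫ with hcdef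
  set F : ℝ → ℝ := fun s => A * φ (((n:ℝ) + (i:ℝ)) * β + s - tj) * ⟪T (β - s) h, g⟫
    with hFdef
  set G : ℝ → ℝ := fun s => C * (‖h‖ * ‖g‖ * M * Real.exp (a * (β - s))) + ‖g‖ * D
    with hGdef
  -- argument of φ lies in the right interval
  have hu : ∀ s ∈ Set.Icc (0:ℝ) β,
      ((n:ℝ) + (i:ℝ)) * β + s - tj ∈ Set.Icc (((i:ℝ) - 2) * β) ((i:ℝ) * β) := by
    intro s hs
    constructor <;> nlinarith [hs.1, hs.2, htj1, htj2]
  -- key pointwise bound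
  have key : ∀ s ∈ Set.Icc (0:ℝ) β, |F s - c| ≤ G s := by
    intro s hs
    have hβs : (0:ℝ) ≤ β - s := by linarith [hs.2]
    have hb1 : |A * φ (((n:ℝ) + (i:ℝ)) * β + s - tj) - 1| ≤ C := hC _ (hu s hs)
    have hb2 : |⟪T (β - s) h, g⟫| ≤ ‖h‖ * ‖g‖ * M * Real.exp (a * (β - s)) := by
      have h1 := abs_real_inner_le_norm (T (β - s) h) g
      have h2 := (T (β - s)).le_opNorm h
      have h3 := hTbound _ hβs
      have h4 : ‖T (β - s) h‖ ≤ M * Real.exp (a * (β - s)) * ‖h‖ := by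
        nlinarith [norm_nonneg h]
      nlinarith [norm_nonneg g, norm_nonneg (T (β - s) h)]
    have hb3 : |⟪T (β - s) h - h, g⟫| ≤ ‖g‖ * D := by
      calc |⟪T (β - s) h - h, g⟫| ≤ ‖T (β - s) h - h‖ * ‖g‖ :=
            abs_real_inner_le_norm _ _
        _ ≤ D * ‖g‖ := by
            have := hD _ ⟨hβs, by linarith [hs.1]⟩
            nlinarith [norm_nonneg g]
        _ = ‖g‖ * D := by ring
    have heq : F s - c = (A * φ (((n:ℝ) + (i:ℝ)) * β + s - tj) - 1) * ⟪T (β - s) h, g⟫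
        + ⟪T (β - s) h - h, g⟫ := by
      simp only [hFdef, hcdef, inner_sub_left]; ring
    calc |F s - c| ≤ |(A * φ (((n:ℝ) + (i:ℝ)) * β + s - tj) - 1) * ⟪T (β - s) h, g⟫|
          + |⟪T (β - s) h - h, g⟫| := by rw [heq]; exact abs_add_le _ _
      _ = |A * φ (((n:ℝ) + (i:ℝ)) * β + s - tj) - 1| * |⟪T (β - s) h, g⟫|
          + |⟪T (β - s) h - h, g⟫| := by rw [abs_mul]
      _ ≤ C * (‖h‖ * ‖g‖ * M * Real.exp (a * (β - s))) + ‖g‖ * D := by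
          gcongr
      _ = G s := rfl
  -- continuity / integrability
  have huIcc : Set.uIcc (0:ℝ) β = Set.Icc 0 β := Set.uIcc_of_le hβ.le
  have hcontφ' : ContinuousOn (fun s => φ (((n:ℝ) + (i:ℝ)) * β + s - tj))
      (Set.Icc (0:ℝ) β) := by
    apply hφcont.comp ((continuous_const.add continuous_id).sub continuous_const).continuousOn
    intro s hs
    exact hsubC (hu s hs)
  have hcontT' : ContinuousOn (fun s => (⟪T (β - s) h, g⟫ : ℝ)) (Set.Icc (0:ℝ) β) := by
    have h1 : ContinuousOn (fun s => T (β - s) h) (Set.Icc (0:ℝ) β) := by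
      apply (hTcont h).comp (continuous_const.sub continuous_id).continuousOn
      intro s hs
      simp only [Set.mem_Ici, id_eq, Pi.sub_apply]
      linarith [hs.2]
    exact (continuous_id.inner (continuous_const : Continuous fun _ : H => g)).comp_continuousOn h1
  have hcontF : ContinuousOn F (Set.Icc (0:ℝ) β) :=
    (continuousOn_const.mul hcontφ').mul hcontT'
  have hintF : IntervalIntegrable F volume 0 β := by
    apply ContinuousOn.intervalIntegrable
    rwa [huIcc]
  have hcontG : Continuous G := by fun_prop
  have hintG : IntervalIntegrable G volume 0 β := hcontG.intervalIntegrable 0 β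
  -- rewrite difference as single integral
  have hrw : (1 / β) * (∫ s in (0:ℝ)..β, F s) - c
      = (1 / β) * ∫ s in (0:ℝ)..β, (F s - c) := by
    rw [intervalIntegral.integral_sub hintF intervalIntegrable_const,
      intervalIntegral.integral_const]
    simp only [smul_eq_mul, sub_zero]
    field_simp
  -- the exponential integral
  have hexp : ∫ s in (0:ℝ)..β, Real.exp (a * (β - s)) = β * ee (a * β) := by
    have h1 : ∫ s in (0:ℝ)..β, Real.exp (a * (β - s)) = ∫ t in (0:ℝ)..β, Real.exp (a * t) := by
      have := intervalIntegral.integral_comp_sub_left (a := 0) (b := β)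
        (fun t => Real.exp (a * t)) β
      simpa using this
    rw [h1]
    by_cases ha : a = 0
    · simp [ha, ee]
    · have h2 := intervalIntegral.integral_comp_mul_left (a := 0) (b := β)
        (fun t => Real.exp t) ha
      simp only [mul_zero, smul_eq_mul] at h2
      rw [h2, integral_exp]
      have haβ : a * β ≠ 0 := mul_ne_zero ha (ne_of_gt hβ)
      simp only [ee, if_neg haβ, Real.exp_zero]
      field_simp
  -- integral of the bound
  have hintG1 : IntervalIntegrable (fun s => C * (‖h‖ * ‖g‖ * M * Real.exp (a * (β - s))))
      volume 0 β := by
    apply Continuous.intervalIntegrable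
    fun_prop
  have hGint : ∫ s in (0:ℝ)..β, G s
      = C * (‖h‖ * ‖g‖ * M) * (β * ee (a * β)) + β * (‖g‖ * D) := by
    rw [hGdef]
    rw [intervalIntegral.integral_add hintG1 intervalIntegrable_const,
      intervalIntegral.integral_const]
    have h3 : ∫ s in (0:ℝ)..β, C * (‖h‖ * ‖g‖ * M * Real.exp (a * (β - s)))
        = C * (‖h‖ * ‖g‖ * M) * ∫ s in (0:ℝ)..β, Real.exp (a * (β - s)) := by
      rw [← intervalIntegral.integral_const_mul]
      congr 1
      ext s
      ring
    rw [h3, hexp]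
    simp only [smul_eq_mul, sub_zero]
    try ring
  -- final estimate
  rw [hrw, abs_mul, abs_of_pos (by positivity : (0:ℝ) < 1 / β)]
  have h1 : |∫ s in (0:ℝ)..β, (F s - c)| ≤ ∫ s in (0:ℝ)..β, G s := by
    calc |∫ s in (0:ℝ)..β, (F s - c)| ≤ ∫ s in (0:ℝ)..β, |F s - c| :=
          intervalIntegral.abs_integral_le_integral_abs hβ.le
      _ ≤ ∫ s in (0:ℝ)..β, G s := by
          exact intervalIntegral.integral_mono_on hβ.le
            ((hintF.sub intervalIntegrable_const).abs) hintG key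
  calc (1 / β) * |∫ s in (0:ℝ)..β, (F s - c)| ≤ (1 / β) * ∫ s in (0:ℝ)..β, G s := by
        gcongr
    _ = ‖g‖ * (‖h‖ * M * C * ee (a * β) + D) := by
        rw [hGint]
        field_simp
end

section
/- Let H be a real Hilbert space and T a strongly continuous one-parameter operator semigroup on H with ‖T(t)‖ ≤ M e^{a t} for all t ≥ 0 (M ≥ 1, a ∈ ℝ). Let ρ > 0 and let φ : [0,∞) → ℝ be continuous with φ(0) = 1 and 0 < φ(t) ≤ e^{−ρt} for all t ≥ 0. Fix k, i ∈ {2,3} and h, g ∈ H. Then for every ε > 0 there exists β₀ > 0 such that for all 0 < β < β₀, all n ∈ ℕ, and all t_j with (n+1)β ≤ t_j < (n+2)β, one has |(1/β)∫₀^β e^{kρβ} φ((n+i)β + s − t_j) ⟨T(β−s)h, g⟩ ds − ⟨h, g⟩| < ε. -/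
open scoped Classical RealInnerProductSpace
open Real MeasureTheory

theorem statement3
    {H : Type*} [NormedAddCommGroup H] [InnerProductSpace ℝ H] [CompleteSpace H]
    (T : ℝ → H →L[ℝ] H)
    (hT0 : T 0 = ContinuousLinearMap.id ℝ H)
    (hTadd : ∀ t s : ℝ, 0 ≤ t → 0 ≤ s → T (t + s) = (T t).comp (T s))
    (hTcont : ∀ v : H, ContinuousOn (fun t => T t v) (Set.Ici 0))
    (M a : ℝ) (hM : 1 ≤ M)
    (hTbound : ∀ t : ℝ, 0 ≤ t → ‖T t‖ ≤ M * Real.exp (a * t))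
    (ρ : ℝ) (hρ : 0 < ρ)
    (φ : ℝ → ℝ) (hφcont : ContinuousOn φ (Set.Ici 0)) (hφ0 : φ 0 = 1)
    (hφpos : ∀ t : ℝ, 0 ≤ t → 0 < φ t)
    (hφdec : ∀ t : ℝ, 0 ≤ t → φ t ≤ Real.exp (-ρ * t))
    (k i : ℕ) (hk : k = 2 ∨ k = 3) (hi : i = 2 ∨ i = 3)
    (h g : H) :
    ∀ ε > 0, ∃ β₀ > 0, ∀ β : ℝ, 0 < β → β < β₀ →
      ∀ (n : ℕ) (tj : ℝ), ((n:ℝ) + 1) * β ≤ tj → tj < ((n:ℝ) + 2) * β →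
      |(1 / β) * (∫ s in (0:ℝ)..β,
          Real.exp ((k:ℝ) * ρ * β) * φ (((n:ℝ) + (i:ℝ)) * β + s - tj)
            * ⟪T (β - s) h, g⟫)
        - ⟪h, g⟫| < ε := by
  intro ε hε
  have hgpos : (0:ℝ) < ‖g‖ + 1 := by positivity
  set c := ⟪h, g⟫ with hcdef
  have hcpos : (0:ℝ) < |c| + 1 := by positivity
  set ε₁ := ε / (4 * (‖g‖ + 1)) with hε₁def
  have hε₁pos : 0 < ε₁ := by positivity
  set ε₂ := min 1 (ε / (4 * (|c| + 1))) with hε₂def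
  have hε₂pos : 0 < ε₂ := lt_min one_pos (by positivity)
  have hε₂le1 : ε₂ ≤ 1 := min_le_left _ _
  have hε₂le : ε₂ ≤ ε / (4 * (|c| + 1)) := min_le_right _ _
  have hT0h : T 0 h = h := by rw [hT0]; rfl
  have hcT : ContinuousWithinAt (fun t => T t h) (Set.Ici 0) 0 := hTcont h 0 Set.self_mem_Ici
  rw [Metric.continuousWithinAt_iff] at hcT
  obtain ⟨δ₁, hδ₁pos, hδ₁⟩ := hcT ε₁ hε₁pos
  have hcφ : ContinuousWithinAt φ (Set.Ici 0) 0 := hφcont 0 Set.self_mem_Ici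
  rw [Metric.continuousWithinAt_iff] at hcφ
  obtain ⟨δ₂, hδ₂pos, hδ₂⟩ := hcφ ε₂ hε₂pos
  set δ₃ := Real.log (1 + ε₂) / (3 * ρ) with hδ₃def
  have hδ₃pos : 0 < δ₃ := div_pos (Real.log_pos (by linarith)) (by linarith)
  refine ⟨min δ₁ (min (δ₂ / 3) δ₃), lt_min hδ₁pos (lt_min (by linarith) hδ₃pos), ?_⟩
  intro β hβpos hββ₀ n tj htj1 htj2
  have hβδ₁ : β < δ₁ := lt_of_lt_of_le hββ₀ (min_le_left _ _)
  have hβδ₂ : 3 * β < δ₂ := by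
    have := lt_of_lt_of_le hββ₀ (le_trans (min_le_right _ _) (min_le_left _ _)); linarith
  have hβδ₃ : β < δ₃ := lt_of_lt_of_le hββ₀ (le_trans (min_le_right _ _) (min_le_right _ _))
  have hk3 : (k:ℝ) ≤ 3 := by rcases hk with hh | hh <;> simp [hh] <;> norm_num
  have hk0 : (0:ℝ) ≤ (k:ℝ) := Nat.cast_nonneg k
  have hi2 : (2:ℝ) ≤ (i:ℝ) := by
    rcases hi with hh | hh <;> simp [hh] <;> norm_num
  have hi3 : (i:ℝ) ≤ 3 := by
    rcases hi with hh | hh <;> simp [hh] <;> norm_num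
  set A := Real.exp ((k:ℝ) * ρ * β) with hAdef
  have hA1 : (1:ℝ) ≤ A := Real.one_le_exp (by positivity)
  have hAub : A < 1 + ε₂ := by
    have h1 : (k:ℝ) * ρ * β ≤ 3 * ρ * β :=
      mul_le_mul_of_nonneg_right (mul_le_mul_of_nonneg_right hk3 hρ.le) hβpos.le
    have h2 : 3 * ρ * β < Real.log (1 + ε₂) := by
      have h3 := hβδ₃
      rw [hδ₃def, lt_div_iff₀ (by linarith : (0:ℝ) < 3 * ρ)] at h3
      nlinarith
    calc A ≤ Real.exp (3 * ρ * β) := Real.exp_le_exp.mpr h1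
      _ < Real.exp (Real.log (1 + ε₂)) := Real.exp_lt_exp.mpr h2
      _ = 1 + ε₂ := Real.exp_log (by linarith)
  set f : ℝ → ℝ := fun s => A * φ (((n:ℝ) + (i:ℝ)) * β + s - tj) * ⟪T (β - s) h, g⟫ with hfdef
  have hnb1 : ((n:ℝ) + (i:ℝ)) * β = (n:ℝ) * β + (i:ℝ) * β := by ring
  have hnb2 : ((n:ℝ) + 1) * β = (n:ℝ) * β + β := by ring
  have hnb3 : ((n:ℝ) + 2) * β = (n:ℝ) * β + 2 * β := by ring
  have hib2 : 2 * β ≤ (i:ℝ) * β := mul_le_mul_of_nonneg_right hi2 hβpos.le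
  have hib3 : (i:ℝ) * β ≤ 3 * β := mul_le_mul_of_nonneg_right hi3 hβpos.le
  have htji : tj ≤ ((n:ℝ) + (i:ℝ)) * β := by linarith [htj2.le]
  have hmaps1 : ∀ s ∈ Set.uIcc (0:ℝ) β, ((n:ℝ) + (i:ℝ)) * β + s - tj ∈ Set.Ici (0:ℝ) := by
    intro s hs
    rw [Set.uIcc_of_le hβpos.le] at hs
    simp only [Set.mem_Ici]
    linarith [hs.1]
  have hmaps2 : ∀ s ∈ Set.uIcc (0:ℝ) β, β - s ∈ Set.Ici (0:ℝ) := by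
    intro s hs; rw [Set.uIcc_of_le hβpos.le] at hs
    simp only [Set.mem_Ici]; linarith [hs.2]
  have hfcont : ContinuousOn f (Set.uIcc 0 β) := by
    apply ContinuousOn.mul
    · apply ContinuousOn.mul continuousOn_const
      exact hφcont.comp (by fun_prop) hmaps1
    · exact ContinuousOn.inner ((hTcont h).comp (by fun_prop) hmaps2) continuousOn_const
  have hfint : IntervalIntegrable f volume 0 β := hfcont.intervalIntegrable
  have hcint : IntervalIntegrable (fun _ : ℝ => c) volume 0 β := intervalIntegrable_const
  have hptw : ∀ x ∈ Set.uIoc (0:ℝ) β, ‖f x - c‖ ≤ ε / 2 + ε / 4 := by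
    intro x hx
    rw [Set.uIoc_of_le hβpos.le] at hx
    obtain ⟨hx0, hxβ⟩ := hx
    have hu0 : 0 ≤ β - x := by linarith
    have huδ : dist (β - x) 0 < δ₁ := by
      rw [Real.dist_eq, sub_zero, abs_of_nonneg hu0]; linarith
    have hTu : ‖T (β - x) h - h‖ < ε₁ := by
      have := hδ₁ (Set.mem_Ici.mpr hu0) huδ
      rwa [hT0h, dist_eq_norm] at this
    set arg := ((n:ℝ) + (i:ℝ)) * β + x - tj with hargdef
    have harg0 : 0 ≤ arg := by simp only [hargdef]; linarith
    have harg3 : arg ≤ 3 * β := by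
      simp only [hargdef]; linarith [htj1]
    have hφc : |φ arg - 1| < ε₂ := by
      have := hδ₂ (Set.mem_Ici.mpr harg0)
        (by rw [Real.dist_eq, sub_zero, abs_of_nonneg harg0]; linarith)
      rwa [hφ0, Real.dist_eq] at this
    have hPpos : 0 < φ arg := hφpos arg harg0
    have hP1 : φ arg ≤ 1 := by
      calc φ arg ≤ Real.exp (-ρ * arg) := hφdec arg harg0
        _ ≤ Real.exp 0 := Real.exp_le_exp.mpr (by
            have := mul_nonneg hρ.le harg0; linarith)
        _ = 1 := Real.exp_zero
    have hinner : |⟪T (β - x) h, g⟫ - c| ≤ ε₁ * ‖g‖ := by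
      have h1 : ⟪T (β - x) h, g⟫ - c = ⟪T (β - x) h - h, g⟫ := by
        rw [hcdef, inner_sub_left]
      rw [h1]
      calc |⟪T (β - x) h - h, g⟫| ≤ ‖T (β - x) h - h‖ * ‖g‖ := abs_real_inner_le_norm _ _
        _ ≤ ε₁ * ‖g‖ := mul_le_mul_of_nonneg_right hTu.le (norm_nonneg g)
    have hAPub : A * φ arg ≤ 1 + ε₂ := by
      have h1 : A * φ arg ≤ A * 1 := mul_le_mul_of_nonneg_left hP1 (by linarith)
      rw [mul_one] at h1; linarith
    have hAPlb : 1 - ε₂ ≤ A * φ arg := by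
      have h1 : 1 - ε₂ < φ arg := by
        have := abs_lt.mp hφc; linarith [this.1]
      have h2 : 1 * φ arg ≤ A * φ arg := mul_le_mul_of_nonneg_right hA1 hPpos.le
      rw [one_mul] at h2; linarith
    have hAP2 : A * φ arg ≤ 2 := by linarith
    have hAPd : |A * φ arg - 1| ≤ ε₂ := abs_le.mpr ⟨by linarith, by linarith⟩
    have hfx : f x = A * φ arg * ⟪T (β - x) h, g⟫ := rfl
    rw [Real.norm_eq_abs, hfx]
    have hb1 : 2 * (ε₁ * ‖g‖) ≤ ε / 2 := by
      have e1 : ε₁ * (‖g‖ + 1) = ε / 4 := by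
        rw [hε₁def]; field_simp
      have e2 : ε₁ * ‖g‖ ≤ ε₁ * (‖g‖ + 1) :=
        mul_le_mul_of_nonneg_left (by linarith) hε₁pos.le
      linarith
    have hb2 : ε₂ * |c| ≤ ε / 4 := by
      have e1 : (ε / (4 * (|c| + 1))) * (|c| + 1) = ε / 4 := by
        field_simp
      have e2 : ε₂ * |c| ≤ (ε / (4 * (|c| + 1))) * (|c| + 1) :=
        mul_le_mul hε₂le (by linarith) (abs_nonneg c) (by positivity)
      linarith
    have hstep1 : |A * φ arg * (⟪T (β - x) h, g⟫ - c)| ≤ 2 * (ε₁ * ‖g‖) := by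
      rw [abs_mul, abs_of_nonneg (by positivity : (0:ℝ) ≤ A * φ arg)]
      exact mul_le_mul hAP2 hinner (abs_nonneg _) (by norm_num)
    have hstep2 : |(A * φ arg - 1) * c| ≤ ε₂ * |c| := by
      rw [abs_mul]
      exact mul_le_mul_of_nonneg_right hAPd (abs_nonneg c)
    calc |A * φ arg * ⟪T (β - x) h, g⟫ - c|
        = |A * φ arg * (⟪T (β - x) h, g⟫ - c) + (A * φ arg - 1) * c| := by
          congr 1; ring
      _ ≤ |A * φ arg * (⟪T (β - x) h, g⟫ - c)| + |(A * φ arg - 1) * c| := abs_add_le _ _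
      _ ≤ 2 * (ε₁ * ‖g‖) + ε₂ * |c| := add_le_add hstep1 hstep2
      _ ≤ ε / 2 + ε / 4 := by linarith
  have hnorm : ‖∫ s in (0:ℝ)..β, (f s - c)‖ ≤ (ε / 2 + ε / 4) * |β - 0| :=
    intervalIntegral.norm_integral_le_of_norm_le_const hptw
  have hint : (∫ s in (0:ℝ)..β, (f s - c)) = (∫ s in (0:ℝ)..β, f s) - β * c := by
    rw [intervalIntegral.integral_sub hfint hcint, intervalIntegral.integral_const]
    simp [smul_eq_mul]
  have hgoal : (1 / β) * (∫ s in (0:ℝ)..β, f s) - c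
      = (1 / β) * (∫ s in (0:ℝ)..β, (f s - c)) := by
    rw [hint]; field_simp
  show |(1 / β) * (∫ s in (0:ℝ)..β, f s) - c| < ε
  rw [hgoal, abs_mul, abs_of_pos (by positivity : (0:ℝ) < 1 / β)]
  have h1 : |∫ s in (0:ℝ)..β, (f s - c)| ≤ (ε / 2 + ε / 4) * β := by
    rw [Real.norm_eq_abs] at hnorm
    rwa [sub_zero, abs_of_pos hβpos] at hnorm
  calc (1 / β) * |∫ s in (0:ℝ)..β, (f s - c)| ≤ (1 / β) * ((ε / 2 + ε / 4) * β) :=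
        mul_le_mul_of_nonneg_left h1 (by positivity)
    _ = ε / 2 + ε / 4 := by field_simp
    _ < ε := by linarith
end

section
/- In the exponential-decay model with zero background source (η ≡ 0) and no noise (ν₁ ≡ ν₂ ≡ 0), for every n ∈ ℕ and every g ∈ H the measured difference satisfies the identity F_n = (1/β) [ Σ_{j : nβ ≤ t_j < (n+1)β} ∫_{t_j}^{(n+1)β} e^{ρ(t_j − s)} ⟨T((n+1)β − s)h_j, g⟩ ds + Σ_{j : t_j < nβ} ∫₀^β e^{ρ(t_j − nβ − s)} ⟨T(β − s)h_j, g⟩ ds ]. -/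
open scoped Classical RealInnerProductSpace
open Real MeasureTheory

theorem statement4
    {H : Type*} [NormedAddCommGroup H] [InnerProductSpace ℝ H] [CompleteSpace H]
    (T : ℝ → H →L[ℝ] H)
    (hT0 : T 0 = ContinuousLinearMap.id ℝ H)
    (hTadd : ∀ t s : ℝ, 0 ≤ t → 0 ≤ s → T (t + s) = (T t).comp (T s))
    (hTcont : ∀ v : H, ContinuousOn (fun t => T t v) (Set.Ici 0))
    (ρ β : ℝ) (hρ : 0 < ρ) (hβ : 0 < β)
    (N : ℕ) (tb : Fin N → ℝ) (hb : Fin N → H)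
    (htpos : ∀ j, 0 < tb j) (htmono : StrictMono tb)
    (htgap : ∀ (i : ℕ) (h1 : i + 1 < N),
      tb ⟨i + 1, h1⟩ - tb ⟨i, Nat.lt_of_succ_lt h1⟩ ≥ 4 * β)
    (u₀ : H) (η : ℝ → H) (u : ℝ → H)
    (hu : ∀ t' : ℝ, 0 ≤ t' → u t' = T t' u₀
      + (∑ j ∈ Finset.univ.filter (fun j => tb j < t'),
          ∫ s in (tb j)..t', Real.exp (-ρ * (s - tb j)) • T (t' - s) (hb j))
      + ∫ s in (0:ℝ)..t', T (t' - s) (η s))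
    (g : H) (σ : ℝ) (hσ : 0 ≤ σ)
    (ν₁ ν₂ : ℕ → ℝ) (hν₁ : ∀ n, |ν₁ n| ≤ σ) (hν₂ : ∀ n, |ν₂ n| ≤ σ)
    (F : ℕ → ℝ)
    (hF : ∀ n : ℕ, F n =
      (⟪u (((n:ℝ) + 1) * β), g⟫ - ⟪T β (u ((n:ℝ) * β)), g⟫) / β
      + ν₁ (n + 1) - ν₂ n)
    (hη0 : ∀ t : ℝ, η t = 0) (hν₁0 : ∀ n, ν₁ n = 0) (hν₂0 : ∀ n, ν₂ n = 0)
    (n : ℕ) :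
    F n = (1 / β) * (
      (∑ j ∈ Finset.univ.filter
          (fun j => (n:ℝ) * β ≤ tb j ∧ tb j < ((n:ℝ) + 1) * β),
        ∫ s in (tb j)..(((n:ℝ) + 1) * β),
          Real.exp (ρ * (tb j - s)) * ⟪T (((n:ℝ) + 1) * β - s) (hb j), g⟫)
      + ∑ j ∈ Finset.univ.filter (fun j => tb j < (n:ℝ) * β),
        ∫ s in (0:ℝ)..β,
          Real.exp (ρ * (tb j - (n:ℝ) * β - s)) * ⟪T (β - s) (hb j), g⟫) := by
  set A : ℝ := (n:ℝ) * β with hAdef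
  set B : ℝ := ((n:ℝ) + 1) * β with hBdef
  have hA0 : (0:ℝ) ≤ A := by positivity
  have hB0 : (0:ℝ) ≤ B := by positivity
  have hAB : A < B := by simp only [hAdef, hBdef]; nlinarith
  have hBA : B = β + A := by simp only [hAdef, hBdef]; ring
  -- continuity of the H-valued integrand
  have hcontH : ∀ (j : Fin N) (c : ℝ),
      ContinuousOn (fun s => Real.exp (-ρ * (s - tb j)) • T (c - s) (hb j)) (Set.Iic c) := by
    intro j c
    apply ContinuousOn.smul
    · exact (Real.continuous_exp.comp (by fun_prop)).continuousOn
    · refine (hTcont (hb j)).comp (continuous_const.sub continuous_id).continuousOn ?_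
      intro s hs
      simp only [Set.mem_Iic] at hs
      simp only [Set.mem_Ici]
      linarith
  have hintH : ∀ (j : Fin N) (a b c : ℝ), a ≤ c → b ≤ c →
      IntervalIntegrable (fun s => Real.exp (-ρ * (s - tb j)) • T (c - s) (hb j))
        volume a b := by
    intro j a b c ha hb'
    apply ContinuousOn.intervalIntegrable
    apply (hcontH j c).mono
    intro x hx
    rcases Set.mem_uIcc.mp hx with ⟨_, h2⟩ | ⟨_, h2⟩
    · exact le_trans h2 hb'
    · exact le_trans h2 ha
  -- continuity / integrability of the scalar integrand
  have hcontS : ∀ (j : Fin N) (c : ℝ),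
      ContinuousOn (fun s => Real.exp (ρ * (tb j - s)) * ⟪T (c - s) (hb j), g⟫)
        (Set.Iic c) := by
    intro j c
    apply ContinuousOn.mul
    · exact (Real.continuous_exp.comp (by fun_prop)).continuousOn
    · have h2 : ContinuousOn (fun s => T (c - s) (hb j)) (Set.Iic c) := by
        refine (hTcont (hb j)).comp (continuous_const.sub continuous_id).continuousOn ?_
        intro s hs
        simp only [Set.mem_Iic] at hs
        simp only [Set.mem_Ici]
        linarith
      exact (continuous_inner.comp (Continuous.prodMk continuous_id continuous_const)).comp_continuousOn h2
  have hintS : ∀ (j : Fin N) (a b c : ℝ), a ≤ c → b ≤ c →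
      IntervalIntegrable (fun s => Real.exp (ρ * (tb j - s)) * ⟪T (c - s) (hb j), g⟫)
        volume a b := by
    intro j a b c ha hb'
    apply ContinuousOn.intervalIntegrable
    apply (hcontS j c).mono
    intro x hx
    rcases Set.mem_uIcc.mp hx with ⟨_, h2⟩ | ⟨_, h2⟩
    · exact le_trans h2 hb'
    · exact le_trans h2 ha
  -- inner product of an interval integral
  have hinner : ∀ (j : Fin N) (a b c : ℝ), a ≤ c → b ≤ c →
      ⟪(∫ s in a..b, Real.exp (-ρ * (s - tb j)) • T (c - s) (hb j)), g⟫
        = ∫ s in a..b, Real.exp (ρ * (tb j - s)) * ⟪T (c - s) (hb j), g⟫ := by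
    intro j a b c ha hb'
    rw [real_inner_comm]
    have h := ContinuousLinearMap.intervalIntegral_comp_comm (innerSL ℝ g) (hintH j a b c ha hb')
    simp only [innerSL_apply_apply] at h
    rw [← h]
    apply intervalIntegral.integral_congr
    intro s _
    simp only [inner_smul_right, real_inner_comm]
    rw [show -ρ * (s - tb j) = ρ * (tb j - s) by ring]
  -- value of ⟪u B, g⟫
  have huB : ⟪u B, g⟫ = ⟪T B u₀, g⟫
      + ∑ j ∈ Finset.univ.filter (fun j => tb j < B),
          ∫ s in (tb j)..B, Real.exp (ρ * (tb j - s)) * ⟪T (B - s) (hb j), g⟫ := by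
    rw [hu B hB0]
    simp only [hη0, map_zero, intervalIntegral.integral_zero, add_zero]
    rw [inner_add_left, sum_inner]
    congr 1
    apply Finset.sum_congr rfl
    intro j hj
    have hjB : tb j < B := by simpa using hj
    exact hinner j (tb j) B B hjB.le le_rfl
  -- value of ⟪T β (u A), g⟫
  have huA : ⟪T β (u A), g⟫ = ⟪T B u₀, g⟫
      + ∑ j ∈ Finset.univ.filter (fun j => tb j < A),
          ∫ s in (tb j)..A, Real.exp (ρ * (tb j - s)) * ⟪T (B - s) (hb j), g⟫ := by
    rw [hu A hA0]
    simp only [hη0, map_zero, intervalIntegral.integral_zero, add_zero]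
    rw [map_add, map_sum, inner_add_left, sum_inner]
    congr 1
    · rw [hBA, hTadd β A hβ.le hA0]
      rfl
    · apply Finset.sum_congr rfl
      intro j hj
      have hjA : tb j < A := by simpa using hj
      rw [← ContinuousLinearMap.intervalIntegral_comp_comm (T β) (hintH j (tb j) A A hjA.le le_rfl)]
      have : (∫ s in (tb j)..A, (T β) (Real.exp (-ρ * (s - tb j)) • T (A - s) (hb j)))
          = ∫ s in (tb j)..A, Real.exp (-ρ * (s - tb j)) • T (B - s) (hb j) := by
        apply intervalIntegral.integral_congr
        intro s hs
        rw [Set.uIcc_of_le hjA.le] at hs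
        simp only [ContinuousLinearMap.map_smul]
        congr 1
        rw [show B - s = β + (A - s) by rw [hBA]; ring,
          hTadd β (A - s) hβ.le (by linarith [hs.2])]
        rfl
      rw [this]
      exact hinner j (tb j) A B (by linarith) hAB.le
  rw [hF n, hν₁0, hν₂0, huB, huA]
  -- split the sum over t_j < B
  have hsplit : Finset.univ.filter (fun j => tb j < B)
      = Finset.univ.filter (fun j => tb j < A)
        ∪ Finset.univ.filter (fun j => A ≤ tb j ∧ tb j < B) := by
    ext j
    simp only [Finset.mem_filter, Finset.mem_union, Finset.mem_univ, true_and]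
    constructor
    · intro h
      rcases lt_or_ge (tb j) A with h' | h'
      · exact Or.inl h'
      · exact Or.inr ⟨h', h⟩
    · rintro (h | ⟨_, h⟩)
      · exact lt_trans h hAB
      · exact h
  have hdisj : Disjoint (Finset.univ.filter (fun j => tb j < A))
      (Finset.univ.filter (fun j => A ≤ tb j ∧ tb j < B)) := by
    rw [Finset.disjoint_left]
    intro j h1 h2
    simp only [Finset.mem_filter, Finset.mem_univ, true_and] at h1 h2
    linarith [h2.1]
  rw [hsplit, Finset.sum_union hdisj]
  -- for t_j < A : ∫_{t_j}^B = ∫_{t_j}^A + ∫_0^β (shifted)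
  have hkey : ∀ j ∈ Finset.univ.filter (fun j => tb j < A),
      (∫ s in (tb j)..B, Real.exp (ρ * (tb j - s)) * ⟪T (B - s) (hb j), g⟫)
        = (∫ s in (tb j)..A, Real.exp (ρ * (tb j - s)) * ⟪T (B - s) (hb j), g⟫)
          + ∫ s in (0:ℝ)..β, Real.exp (ρ * (tb j - A - s)) * ⟪T (β - s) (hb j), g⟫ := by
    intro j hj
    have hjA : tb j < A := by simpa using hj
    have hadj := intervalIntegral.integral_add_adjacent_intervals
      (hintS j (tb j) A B (hjA.le.trans hAB.le) hAB.le)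
      (hintS j A B B hAB.le le_rfl)
    rw [← hadj]
    congr 1
    have hshift : (∫ s in (0:ℝ)..β,
        Real.exp (ρ * (tb j - (s + A))) * ⟪T (B - (s + A)) (hb j), g⟫)
        = ∫ s in A..B, Real.exp (ρ * (tb j - s)) * ⟪T (B - s) (hb j), g⟫ := by
      rw [intervalIntegral.integral_comp_add_right
        (fun s => Real.exp (ρ * (tb j - s)) * ⟪T (B - s) (hb j), g⟫) A]
      rw [zero_add, hBA, add_comm β A]
    rw [← hshift]
    apply intervalIntegral.integral_congr
    intro s _
    simp only [show tb j - A - s = tb j - (s + A) from by ring,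
      show β - s = B - (s + A) from by rw [hBA]; ring]
  rw [Finset.sum_congr rfl hkey, Finset.sum_add_distrib]
  field_simp
  ring
end

section
/- In the exponential-decay model with zero background source (η ≡ 0) and no noise (ν₁ ≡ ν₂ ≡ 0): if n ∈ ℕ is such that no burst time t_j lies in the interval [nβ, (n+2)β), then for every g ∈ H, e^{ρβ} F_{n+1} − F_n = 0. -/
open scoped Classical RealInnerProductSpace
open Real MeasureTheory

set_option maxHeartbeats 2000000 in
theorem statement5
    {H : Type*} [NormedAddCommGroup H] [InnerProductSpace ℝ H] [CompleteSpace H]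
    (T : ℝ → H →L[ℝ] H)
    (hT0 : T 0 = ContinuousLinearMap.id ℝ H)
    (hTadd : ∀ t s : ℝ, 0 ≤ t → 0 ≤ s → T (t + s) = (T t).comp (T s))
    (hTcont : ∀ v : H, ContinuousOn (fun t => T t v) (Set.Ici 0))
    (ρ β : ℝ) (hρ : 0 < ρ) (hβ : 0 < β)
    (N : ℕ) (tb : Fin N → ℝ) (hb : Fin N → H)
    (htpos : ∀ j, 0 < tb j) (htmono : StrictMono tb)
    (htgap : ∀ (i : ℕ) (h1 : i + 1 < N),
      tb ⟨i + 1, h1⟩ - tb ⟨i, Nat.lt_of_succ_lt h1⟩ ≥ 4 * β)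
    (u₀ : H) (η : ℝ → H) (u : ℝ → H)
    (hu : ∀ t' : ℝ, 0 ≤ t' → u t' = T t' u₀
      + (∑ j ∈ Finset.univ.filter (fun j => tb j < t'),
          ∫ s in (tb j)..t', Real.exp (-ρ * (s - tb j)) • T (t' - s) (hb j))
      + ∫ s in (0:ℝ)..t', T (t' - s) (η s))
    (g : H) (σ : ℝ) (hσ : 0 ≤ σ)
    (ν₁ ν₂ : ℕ → ℝ) (hν₁ : ∀ n, |ν₁ n| ≤ σ) (hν₂ : ∀ n, |ν₂ n| ≤ σ)
    (F : ℕ → ℝ)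
    (hF : ∀ n : ℕ, F n =
      (⟪u (((n:ℝ) + 1) * β), g⟫ - ⟪T β (u ((n:ℝ) * β)), g⟫) / β
      + ν₁ (n + 1) - ν₂ n)
    (hη0 : ∀ t : ℝ, η t = 0) (hν₁0 : ∀ n, ν₁ n = 0) (hν₂0 : ∀ n, ν₂ n = 0)
    (n : ℕ)
    (hnb : ∀ j : Fin N, ¬((n:ℝ) * β ≤ tb j ∧ tb j < ((n:ℝ) + 2) * β)) :
    Real.exp (ρ * β) * F (n + 1) - F n = 0 := by
  have hβ' := hβ.le
  classical
  set A := (n:ℝ)*β with hAdef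
  set B := ((n:ℝ)+1)*β with hBdef
  set C := ((n:ℝ)+2)*β with hCdef
  have hA0 : 0 ≤ A := mul_nonneg (Nat.cast_nonneg n) hβ'
  have hAB : A + β = B := by rw [hAdef, hBdef]; ring
  have hBC : B + β = C := by rw [hBdef, hCdef]; ring
  have hAleB : A ≤ B := by linarith
  have hBleC : B ≤ C := by linarith
  have hB0 : 0 ≤ B := hA0.trans hAleB
  have hC0 : 0 ≤ C := hB0.trans hBleC
  set S : Finset (Fin N) := Finset.univ.filter (fun j => tb j < A) with hS
  have hfilB : Finset.univ.filter (fun j => tb j < B) = S := by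
    rw [hS]
    apply Finset.filter_congr
    intro j _
    constructor
    · intro h
      by_contra h'
      push_neg at h'
      exact hnb j ⟨h', by linarith⟩
    · intro h; linarith
  have hfilC : Finset.univ.filter (fun j => tb j < C) = S := by
    rw [hS]
    apply Finset.filter_congr
    intro j _
    constructor
    · intro h
      by_contra h'
      push_neg at h'
      exact hnb j ⟨h', h⟩
    · intro h; linarith
  have hmemS : ∀ j ∈ S, tb j ≤ A := by
    intro j hj
    rw [hS, Finset.mem_filter] at hj
    exact hj.2.le
  -- integrability
  have hInt : ∀ (c t a b : ℝ) (v : H), a ≤ b → b ≤ t →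
      IntervalIntegrable (fun s => Real.exp (-ρ*(s-c)) • T (t-s) v) MeasureTheory.volume a b := by
    intro c t a b v hab hbt
    apply ContinuousOn.intervalIntegrable
    apply ContinuousOn.smul
    · exact (Real.continuous_exp.comp (by continuity)).continuousOn
    · apply (hTcont v).comp (Continuous.continuousOn (by continuity))
      intro s hs
      rw [Set.uIcc_of_le hab] at hs
      exact Set.mem_Ici.mpr (by linarith [hs.2])
  -- T β commutes with the burst integrals
  have hcomm : ∀ (c t a b : ℝ) (v : H), a ≤ b → b ≤ t →
      T β (∫ s in a..b, Real.exp (-ρ*(s-c)) • T (t-s) v)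
        = ∫ s in a..b, Real.exp (-ρ*(s-c)) • T (t+β-s) v := by
    intro c t a b v hab hbt
    rw [← ContinuousLinearMap.intervalIntegral_comp_comm _ (hInt c t a b v hab hbt)]
    apply intervalIntegral.integral_congr
    intro s hs
    rw [Set.uIcc_of_le hab] at hs
    simp only [ContinuousLinearMap.map_smul]
    congr 1
    have h1 := hTadd β (t - s) hβ' (by linarith [hs.2])
    have h2 : t + β - s = β + (t - s) := by ring
    rw [h2, h1]
    rfl
  -- expansions of u at A, B, C
  have huA : u A = T A u₀ + ∑ j ∈ S, ∫ s in (tb j)..A, Real.exp (-ρ*(s - tb j)) • T (A - s) (hb j) := by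
    rw [hu A hA0]
    simp [hη0, hS]
  have huB : u B = T B u₀ + ∑ j ∈ S, ∫ s in (tb j)..B, Real.exp (-ρ*(s - tb j)) • T (B - s) (hb j) := by
    rw [hu B hB0, hfilB]
    simp [hη0]
  have huC : u C = T C u₀ + ∑ j ∈ S, ∫ s in (tb j)..C, Real.exp (-ρ*(s - tb j)) • T (C - s) (hb j) := by
    rw [hu C hC0, hfilC]
    simp [hη0]
  -- the two differences
  have hTu₀ : ∀ t : ℝ, 0 ≤ t → T β (T t u₀) = T (t + β) u₀ := by
    intro t ht
    rw [add_comm, hTadd β t hβ' ht]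
    rfl
  have hdiff : ∀ (a b : ℝ), 0 ≤ a → a + β = b →
      (∀ j ∈ S, tb j ≤ a) →
      (T b u₀ + ∑ j ∈ S, ∫ s in (tb j)..b, Real.exp (-ρ*(s - tb j)) • T (b - s) (hb j))
        - T β (T a u₀ + ∑ j ∈ S, ∫ s in (tb j)..a, Real.exp (-ρ*(s - tb j)) • T (a - s) (hb j))
      = ∑ j ∈ S, ∫ s in a..b, Real.exp (-ρ*(s - tb j)) • T (b - s) (hb j) := by
    intro a b ha hab' hjle
    have haleb : a ≤ b := by linarith
    rw [map_add, map_sum, hTu₀ a ha, hab']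
    have hsum : ∀ j ∈ S, T β (∫ s in (tb j)..a, Real.exp (-ρ*(s - tb j)) • T (a - s) (hb j))
        = ∫ s in (tb j)..a, Real.exp (-ρ*(s - tb j)) • T (b - s) (hb j) := by
      intro j hj
      rw [hcomm (tb j) a (tb j) a (hb j) (hjle j hj) le_rfl]
      apply intervalIntegral.integral_congr
      intro s _
      beta_reduce
      rw [show a + β - s = b - s by linarith]
    rw [Finset.sum_congr rfl hsum]
    have : (T b u₀ + ∑ j ∈ S, ∫ s in (tb j)..b, Real.exp (-ρ*(s - tb j)) • T (b - s) (hb j))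
        - (T b u₀ + ∑ j ∈ S, ∫ s in (tb j)..a, Real.exp (-ρ*(s - tb j)) • T (b - s) (hb j))
      = ∑ j ∈ S, ((∫ s in (tb j)..b, Real.exp (-ρ*(s - tb j)) • T (b - s) (hb j))
          - ∫ s in (tb j)..a, Real.exp (-ρ*(s - tb j)) • T (b - s) (hb j)) := by
      rw [Finset.sum_sub_distrib]
      abel
    rw [this]
    apply Finset.sum_congr rfl
    intro j hj
    have h1 := hInt (tb j) b (tb j) a (hb j) (hjle j hj) haleb
    have h2 := hInt (tb j) b a b (hb j) haleb le_rfl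
    rw [← intervalIntegral.integral_add_adjacent_intervals h1 h2]
    abel
  have hD1 : u B - T β (u A) = ∑ j ∈ S, ∫ s in A..B, Real.exp (-ρ*(s - tb j)) • T (B - s) (hb j) := by
    rw [huA, huB]
    exact hdiff A B hA0 hAB hmemS
  have hD2 : u C - T β (u B) = ∑ j ∈ S, ∫ s in B..C, Real.exp (-ρ*(s - tb j)) • T (C - s) (hb j) := by
    rw [huB, huC]
    exact hdiff B C hB0 hBC (fun j hj => (hmemS j hj).trans hAleB)
  -- change of variables
  have hshift : ∀ j ∈ S, (∫ s in B..C, Real.exp (-ρ*(s - tb j)) • T (C - s) (hb j))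
      = Real.exp (-(ρ*β)) • ∫ s in A..B, Real.exp (-ρ*(s - tb j)) • T (B - s) (hb j) := by
    intro j _
    have := intervalIntegral.integral_comp_add_right
      (a := A) (b := B) (fun s => Real.exp (-ρ*(s - tb j)) • T (C - s) (hb j)) β
    rw [hAB, hBC] at this
    rw [← this, ← intervalIntegral.integral_smul]
    apply intervalIntegral.integral_congr
    intro s _
    have he : Real.exp (-ρ*(s + β - tb j)) = Real.exp (-(ρ*β)) * Real.exp (-ρ*(s - tb j)) := by
      rw [← Real.exp_add]
      ring_nf
    have hc : C - (s + β) = B - s := by linarith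
    beta_reduce
    rw [he, hc, smul_smul]
  have hD21 : u C - T β (u B) = Real.exp (-(ρ*β)) • (u B - T β (u A)) := by
    rw [hD1, hD2, Finset.sum_congr rfl hshift, ← Finset.smul_sum]
  -- conclude
  have hFn : F n = ⟪u B - T β (u A), g⟫ / β := by
    rw [hF n, hν₁0, hν₂0, inner_sub_left]
    ring
  have hFn1 : F (n+1) = ⟪u C - T β (u B), g⟫ / β := by
    rw [hF (n+1), hν₁0, hν₂0, inner_sub_left]
    push_cast
    rw [show ((n:ℝ) + 1 + 1) * β = C by rw [hCdef]; ring,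
        show ((n:ℝ) + 1) * β = B from rfl]
    ring
  rw [hFn, hFn1, hD21, real_inner_smul_left]
  rw [show Real.exp (ρ*β) * (Real.exp (-(ρ*β)) * ⟪u B - T β (u A), g⟫ / β)
      = (Real.exp (ρ*β) * Real.exp (-(ρ*β))) * (⟪u B - T β (u A), g⟫ / β) by ring,
    ← Real.exp_add]
  simp
end

section
/- In the exponential-decay model with zero background source (η ≡ 0) and no noise (ν₁ ≡ ν₂ ≡ 0): if n ≥ 1 and the j-th burst time satisfies (n+1)β ≤ t_j < (n+2)β, then for every g ∈ H, e^{3ρβ} F_{n+2} − F_{n−1} = (1/β) ∫₀^β e^{ρ(t_j − (n−1)β − s)} ⟨T(β − s)h_j, g⟩ ds. -/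
open scoped Classical RealInnerProductSpace
open Real MeasureTheory

private lemma contOn6 {H : Type*} [NormedAddCommGroup H] [InnerProductSpace ℝ H]
    (T : ℝ → H →L[ℝ] H)
    (hTcont : ∀ v : H, ContinuousOn (fun t => T t v) (Set.Ici 0))
    (d : ℝ) (h : H) :
    ContinuousOn (fun s => T (d - s) h) (Set.Iic d) := by
  exact (hTcont h).comp (continuous_const.sub continuous_id).continuousOn
    (fun s hs => Set.mem_Ici.mpr (sub_nonneg.2 hs))

private lemma ii6 {H : Type*} [NormedAddCommGroup H] [InnerProductSpace ℝ H]
    (T : ℝ → H →L[ℝ] H)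
    (hTcont : ∀ v : H, ContinuousOn (fun t => T t v) (Set.Ici 0))
    (ρ c d a b : ℝ) (h : H) (had : a ≤ d) (hbd : b ≤ d) :
    IntervalIntegrable (fun s => Real.exp (-ρ * (s - c)) • T (d - s) h) volume a b := by
  apply ContinuousOn.intervalIntegrable
  apply ContinuousOn.smul
  · exact (Real.continuous_exp.comp (by continuity)).continuousOn
  · refine (contOn6 T hTcont d h).mono fun x hx => ?_
    rcases Set.mem_uIcc.1 hx with ⟨_, h2⟩ | ⟨_, h2⟩
    · exact Set.mem_Iic.2 (h2.trans hbd)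
    · exact Set.mem_Iic.2 (h2.trans had)

private lemma key6 {H : Type*} [NormedAddCommGroup H] [InnerProductSpace ℝ H] [CompleteSpace H]
    (T : ℝ → H →L[ℝ] H)
    (hTadd : ∀ t s : ℝ, 0 ≤ t → 0 ≤ s → T (t + s) = (T t).comp (T s))
    (hTcont : ∀ v : H, ContinuousOn (fun t => T t v) (Set.Ici 0))
    (ρ β : ℝ) (hβ : 0 < β) (c t : ℝ) (hct : c ≤ t)
    (h g : H) :
    ⟪(∫ s in c..(t+β), Real.exp (-ρ * (s - c)) • T (t + β - s) h)
      - T β (∫ s in c..t, Real.exp (-ρ * (s - c)) • T (t - s) h), g⟫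
    = ∫ s in (0:ℝ)..β, Real.exp (-ρ * (t + s - c)) * ⟪T (β - s) h, g⟫ := by
  have hii1 : IntervalIntegrable (fun s => Real.exp (-ρ * (s - c)) • T (t + β - s) h)
      volume c t := ii6 T hTcont ρ c (t+β) c t h (by linarith) (by linarith)
  have hii2 : IntervalIntegrable (fun s => Real.exp (-ρ * (s - c)) • T (t + β - s) h)
      volume t (t+β) := ii6 T hTcont ρ c (t+β) t (t+β) h (by linarith) le_rfl
  have hii3 : IntervalIntegrable (fun s => Real.exp (-ρ * (s - c)) • T (t - s) h)
      volume c t := ii6 T hTcont ρ c t c t h hct le_rfl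
  have hTb : T β (∫ s in c..t, Real.exp (-ρ * (s - c)) • T (t - s) h)
      = ∫ s in c..t, Real.exp (-ρ * (s - c)) • T (t + β - s) h := by
    rw [← ContinuousLinearMap.intervalIntegral_comp_comm _ hii3]
    refine intervalIntegral.integral_congr fun s hs => ?_
    rw [Set.uIcc_of_le hct] at hs
    have hst : s ≤ t := hs.2
    rw [(T β).map_smul]
    congr 1
    rw [show t + β - s = β + (t - s) by ring, hTadd β (t - s) hβ.le (by linarith)]
    rfl
  have hsplit : (∫ s in c..(t+β), Real.exp (-ρ * (s - c)) • T (t + β - s) h)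
      = (∫ s in c..t, Real.exp (-ρ * (s - c)) • T (t + β - s) h)
        + ∫ s in t..(t+β), Real.exp (-ρ * (s - c)) • T (t + β - s) h :=
    (intervalIntegral.integral_add_adjacent_intervals hii1 hii2).symm
  rw [hTb, hsplit, add_sub_cancel_left]
  have hinner : ⟪∫ s in t..(t+β), Real.exp (-ρ * (s - c)) • T (t + β - s) h, g⟫
      = ∫ s in t..(t+β), Real.exp (-ρ * (s - c)) * ⟪T (t + β - s) h, g⟫ := by
    rw [real_inner_comm]
    have h2 := (innerSL ℝ g).intervalIntegral_comp_comm hii2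
    simp only [innerSL_apply_apply] at h2
    rw [← h2]
    refine intervalIntegral.integral_congr fun s _ => ?_
    simp [real_inner_smul_right, real_inner_comm]
  rw [hinner]
  have hsub := intervalIntegral.integral_comp_add_left
    (a := (0:ℝ)) (b := β) (fun s => Real.exp (-ρ * (s - c)) * ⟪T (t + β - s) h, g⟫) t
  rw [add_zero] at hsub
  rw [← hsub]
  have heq : ∀ s : ℝ, Real.exp (-ρ * (t + s - c)) * ⟪T (t + β - (t + s)) h, g⟫
      = Real.exp (-ρ * (t + s - c)) * ⟪T (β - s) h, g⟫ := fun s => by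
    rw [show t + β - (t + s) = β - s by ring]
  exact intervalIntegral.integral_congr fun s _ => heq s
private lemma Fval6
    {H : Type*} [NormedAddCommGroup H] [InnerProductSpace ℝ H] [CompleteSpace H]
    (T : ℝ → H →L[ℝ] H)
    (hTadd : ∀ t s : ℝ, 0 ≤ t → 0 ≤ s → T (t + s) = (T t).comp (T s))
    (hTcont : ∀ v : H, ContinuousOn (fun t => T t v) (Set.Ici 0))
    (ρ β : ℝ) (hβ : 0 < β)
    (N : ℕ) (tb : Fin N → ℝ) (hb : Fin N → H)
    (u₀ : H) (η : ℝ → H) (u : ℝ → H)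
    (hu : ∀ t' : ℝ, 0 ≤ t' → u t' = T t' u₀
      + (∑ j ∈ Finset.univ.filter (fun j => tb j < t'),
          ∫ s in (tb j)..t', Real.exp (-ρ * (s - tb j)) • T (t' - s) (hb j))
      + ∫ s in (0:ℝ)..t', T (t' - s) (η s))
    (g : H) (ν₁ ν₂ : ℕ → ℝ) (F : ℕ → ℝ)
    (hF : ∀ n : ℕ, F n =
      (⟪u (((n:ℝ) + 1) * β), g⟫ - ⟪T β (u ((n:ℝ) * β)), g⟫) / β
      + ν₁ (n + 1) - ν₂ n)
    (hη0 : ∀ t : ℝ, η t = 0) (hν₁0 : ∀ n, ν₁ n = 0) (hν₂0 : ∀ n, ν₂ n = 0)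
    (m : ℕ) (r : ℝ) (hr : (m:ℝ) = r) (S : Finset (Fin N))
    (hS1 : Finset.univ.filter (fun i => tb i < (r + 1) * β) = S)
    (hS0 : Finset.univ.filter (fun i => tb i < r * β) = S)
    (hcS : ∀ i ∈ S, tb i ≤ r * β) :
    F m = (1/β) * ∑ i ∈ S, ∫ s in (0:ℝ)..β,
      Real.exp (-ρ * (r * β + s - tb i)) * ⟪T (β - s) (hb i), g⟫ := by
  subst hr
  have h0 : (0:ℝ) ≤ (m:ℝ) * β := by positivity
  have h1 : (0:ℝ) ≤ ((m:ℝ) + 1) * β := by positivity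
  rw [hF, hν₁0, hν₂0, hu _ h1, hu _ h0, hS1, hS0]
  simp only [hη0, map_zero, intervalIntegral.integral_zero, add_zero, sub_zero]
  rw [show ((m:ℝ) + 1) * β = (m:ℝ) * β + β by ring]
  have hu0 : T ((m:ℝ) * β + β) u₀ = T β (T ((m:ℝ) * β) u₀) := by
    rw [show (m:ℝ) * β + β = β + (m:ℝ) * β by ring, hTadd β ((m:ℝ) * β) hβ.le h0]
    rfl
  rw [map_add (T β), hu0, map_sum (T β)]
  rw [inner_add_left, inner_add_left]
  rw [sum_inner, sum_inner, add_sub_add_left_eq_sub, ← Finset.sum_sub_distrib]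
  have hcongr : ∀ i ∈ S,
      (⟪∫ s in (tb i)..((m:ℝ) * β + β), Real.exp (-ρ * (s - tb i)) • T ((m:ℝ) * β + β - s) (hb i), g⟫
        - ⟪T β (∫ s in (tb i)..((m:ℝ) * β), Real.exp (-ρ * (s - tb i)) • T ((m:ℝ) * β - s) (hb i)), g⟫)
      = ∫ s in (0:ℝ)..β, Real.exp (-ρ * ((m:ℝ) * β + s - tb i)) * ⟪T (β - s) (hb i), g⟫ := by
    intro i hi
    rw [← inner_sub_left]
    exact key6 T hTadd hTcont ρ β hβ (tb i) ((m:ℝ) * β) (hcS i hi) (hb i) g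
  rw [Finset.sum_congr rfl hcongr]
  ring
theorem statement6
    {H : Type*} [NormedAddCommGroup H] [InnerProductSpace ℝ H] [CompleteSpace H]
    (T : ℝ → H →L[ℝ] H)
    (hT0 : T 0 = ContinuousLinearMap.id ℝ H)
    (hTadd : ∀ t s : ℝ, 0 ≤ t → 0 ≤ s → T (t + s) = (T t).comp (T s))
    (hTcont : ∀ v : H, ContinuousOn (fun t => T t v) (Set.Ici 0))
    (ρ β : ℝ) (hρ : 0 < ρ) (hβ : 0 < β)
    (N : ℕ) (tb : Fin N → ℝ) (hb : Fin N → H)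
    (htpos : ∀ j, 0 < tb j) (htmono : StrictMono tb)
    (htgap : ∀ (i : ℕ) (h1 : i + 1 < N),
      tb ⟨i + 1, h1⟩ - tb ⟨i, Nat.lt_of_succ_lt h1⟩ ≥ 4 * β)
    (u₀ : H) (η : ℝ → H) (u : ℝ → H)
    (hu : ∀ t' : ℝ, 0 ≤ t' → u t' = T t' u₀
      + (∑ j ∈ Finset.univ.filter (fun j => tb j < t'),
          ∫ s in (tb j)..t', Real.exp (-ρ * (s - tb j)) • T (t' - s) (hb j))
      + ∫ s in (0:ℝ)..t', T (t' - s) (η s))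
    (g : H) (σ : ℝ) (hσ : 0 ≤ σ)
    (ν₁ ν₂ : ℕ → ℝ) (hν₁ : ∀ n, |ν₁ n| ≤ σ) (hν₂ : ∀ n, |ν₂ n| ≤ σ)
    (F : ℕ → ℝ)
    (hF : ∀ n : ℕ, F n =
      (⟪u (((n:ℝ) + 1) * β), g⟫ - ⟪T β (u ((n:ℝ) * β)), g⟫) / β
      + ν₁ (n + 1) - ν₂ n)
    (hη0 : ∀ t : ℝ, η t = 0) (hν₁0 : ∀ n, ν₁ n = 0) (hν₂0 : ∀ n, ν₂ n = 0)
    (n : ℕ) (hn : 1 ≤ n) (j : Fin N)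
    (htj1 : ((n:ℝ) + 1) * β ≤ tb j) (htj2 : tb j < ((n:ℝ) + 2) * β) :
    Real.exp (3 * ρ * β) * F (n + 2) - F (n - 1)
      = (1 / β) * ∫ s in (0:ℝ)..β,
          Real.exp (ρ * (tb j - ((n:ℝ) - 1) * β - s)) * ⟪T (β - s) (hb j), g⟫ := by
  have hn' : (1:ℝ) ≤ (n:ℝ) := by exact_mod_cast hn
  -- gap consequences
  have hgt : ∀ i : Fin N, j < i → tb j + 4 * β ≤ tb i := by
    intro i hji
    have hji' : (j:ℕ) < (i:ℕ) := hji
    have h1 : (j:ℕ) + 1 < N := by omega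
    have h2 := htgap j.val h1
    have h3 : (⟨(j:ℕ), Nat.lt_of_succ_lt h1⟩ : Fin N) = j := by simp
    rw [h3] at h2
    have h4 : (⟨(j:ℕ) + 1, h1⟩ : Fin N) ≤ i := by
      simp only [Fin.le_def]; omega
    have h5 := htmono.monotone h4
    linarith
  have hlt : ∀ i : Fin N, i < j → tb i + 4 * β ≤ tb j := by
    intro i hij
    have hij' : (i:ℕ) < (j:ℕ) := hij
    have h1 : (i:ℕ) + 1 < N := by omega
    have h2 := htgap i.val h1
    have h3 : (⟨(i:ℕ), Nat.lt_of_succ_lt h1⟩ : Fin N) = i := by simp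
    rw [h3] at h2
    have h4 : (⟨(i:ℕ) + 1, h1⟩ : Fin N) ≤ j := by
      simp only [Fin.le_def]; omega
    have h5 := htmono.monotone h4
    linarith
  set S0 : Finset (Fin N) := Finset.univ.filter (fun i => i < j) with hS0def
  set S1 : Finset (Fin N) := Finset.univ.filter (fun i => i ≤ j) with hS1def
  have hmem0 : ∀ i : Fin N, i ∈ S0 ↔ i < j := by
    intro i; simp [hS0def]
  have hmem1 : ∀ i : Fin N, i ∈ S1 ↔ i ≤ j := by
    intro i; simp [hS1def]
  have hf1 : Finset.univ.filter (fun i => tb i < ((n:ℝ) + 2 + 1) * β) = S1 := by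
    ext i
    simp only [Finset.mem_filter, Finset.mem_univ, true_and, hmem1]
    constructor
    · intro hi
      by_contra hc
      have hji : j < i := lt_of_not_ge hc
      have := hgt i hji
      nlinarith
    · intro hi
      have := htmono.monotone hi
      nlinarith
  have hf1' : Finset.univ.filter (fun i => tb i < ((n:ℝ) + 2) * β) = S1 := by
    ext i
    simp only [Finset.mem_filter, Finset.mem_univ, true_and, hmem1]
    constructor
    · intro hi
      by_contra hc
      have hji : j < i := lt_of_not_ge hc
      have := hgt i hji
      nlinarith
    · intro hi
      have := htmono.monotone hi
      nlinarith
  have hf0 : Finset.univ.filter (fun i => tb i < ((n:ℝ) - 1 + 1) * β) = S0 := by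
    ext i
    simp only [Finset.mem_filter, Finset.mem_univ, true_and, hmem0]
    constructor
    · intro hi
      by_contra hc
      have hji : j ≤ i := le_of_not_gt hc
      have := htmono.monotone hji
      nlinarith
    · intro hi
      have := hlt i hi
      nlinarith
  have hf0' : Finset.univ.filter (fun i => tb i < ((n:ℝ) - 1) * β) = S0 := by
    ext i
    simp only [Finset.mem_filter, Finset.mem_univ, true_and, hmem0]
    constructor
    · intro hi
      by_contra hc
      have hji : j ≤ i := le_of_not_gt hc
      have := htmono.monotone hji
      nlinarith
    · intro hi
      have := hlt i hi
      nlinarith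
  have hcS1 : ∀ i ∈ S1, tb i ≤ ((n:ℝ) + 2) * β := by
    intro i hi
    have := htmono.monotone ((hmem1 i).1 hi)
    linarith
  have hcS0 : ∀ i ∈ S0, tb i ≤ ((n:ℝ) - 1) * β := by
    intro i hi
    have := hlt i ((hmem0 i).1 hi)
    nlinarith
  have hr2 : ((n + 2 : ℕ) : ℝ) = (n:ℝ) + 2 := by push_cast; ring
  have hr0 : ((n - 1 : ℕ) : ℝ) = (n:ℝ) - 1 := by
    rw [Nat.cast_sub hn, Nat.cast_one]
  have hF2 := Fval6 T hTadd hTcont ρ β hβ N tb hb u₀ η u hu g ν₁ ν₂ F hF hη0 hν₁0 hν₂0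
    (n + 2) ((n:ℝ) + 2) hr2 S1 hf1 hf1' hcS1
  have hF0 := Fval6 T hTadd hTcont ρ β hβ N tb hb u₀ η u hu g ν₁ ν₂ F hF hη0 hν₁0 hν₂0
    (n - 1) ((n:ℝ) - 1) hr0 S0 hf0 hf0' hcS0
  rw [hF2, hF0]
  have hIrw : ∀ i : Fin N,
      Real.exp (3 * ρ * β) * ∫ s in (0:ℝ)..β,
        Real.exp (-ρ * (((n:ℝ) + 2) * β + s - tb i)) * ⟪T (β - s) (hb i), g⟫
      = ∫ s in (0:ℝ)..β,
        Real.exp (-ρ * (((n:ℝ) - 1) * β + s - tb i)) * ⟪T (β - s) (hb i), g⟫ := by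
    intro i
    rw [← intervalIntegral.integral_const_mul]
    refine intervalIntegral.integral_congr fun s _ => ?_
    rw [← mul_assoc, ← Real.exp_add]
    congr 2
    ring
  have hjS0 : j ∉ S0 := by simp [hmem0]
  have hins : S1 = insert j S0 := by
    ext i
    simp only [Finset.mem_insert, hmem0, hmem1]
    constructor
    · intro hi; rcases lt_or_eq_of_le hi with h | h
      · exact Or.inr h
      · exact Or.inl h
    · rintro (rfl | h)
      · exact le_rfl
      · exact h.le
  rw [hins, Finset.sum_insert hjS0]
  have e1 := hIrw j
  have e2 : ∑ i ∈ S0, (Real.exp (3 * ρ * β) * ∫ s in (0:ℝ)..β,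
        Real.exp (-ρ * (((n:ℝ) + 2) * β + s - tb i)) * ⟪T (β - s) (hb i), g⟫)
      = ∑ i ∈ S0, ∫ s in (0:ℝ)..β,
        Real.exp (-ρ * (((n:ℝ) - 1) * β + s - tb i)) * ⟪T (β - s) (hb i), g⟫ :=
    Finset.sum_congr rfl fun i _ => hIrw i
  have e3 : (∫ s in (0:ℝ)..β, Real.exp (-ρ * (((n:ℝ) - 1) * β + s - tb j)) * ⟪T (β - s) (hb j), g⟫)
      = ∫ s in (0:ℝ)..β, Real.exp (ρ * (tb j - ((n:ℝ) - 1) * β - s)) * ⟪T (β - s) (hb j), g⟫ := by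
    refine intervalIntegral.integral_congr fun s _ => ?_
    rw [show -ρ * (((n:ℝ) - 1) * β + s - tb j) = ρ * (tb j - ((n:ℝ) - 1) * β - s) by ring]
  have e2' : Real.exp (3 * ρ * β) * ∑ i ∈ S0, ∫ s in (0:ℝ)..β,
        Real.exp (-ρ * (((n:ℝ) + 2) * β + s - tb i)) * ⟪T (β - s) (hb i), g⟫
      = ∑ i ∈ S0, ∫ s in (0:ℝ)..β,
        Real.exp (-ρ * (((n:ℝ) - 1) * β + s - tb i)) * ⟪T (β - s) (hb i), g⟫ := by
    rw [Finset.mul_sum]; exact e2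
  linear_combination (1/β) * e1 + (1/β) * e2' + (1/β) * e3
end
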